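/- arXiv:2409.14895 — 8 statements merged into one kernel-verified Lean document; each statement's English description precedes it below -/
import Mathlib

section
/- Let m ≥ 1 and, for i ∈ I = {1,…,m}, let f_i : ℝⁿ → ℝ and a_i ≥ 0 be such that x ↦ f_i(x) + a_i‖x‖² is convex on ℝⁿ. Let A = {x ∈ ℝⁿ : f_i(x) ≤ 0 for all i ∈ I} and, for x ∈ ℝⁿ, let I(x) = {i ∈ I : f_i(x) > 0}. Let k ∈ ℕ and let x_0,…,x_k ∈ ℝⁿ be such that for every ℓ ∈ {0,…,k} and every i ∈ I(x_ℓ) there is b_i^ℓ ∈ ℝⁿ with f_i(y) + a_i‖y‖² ≥ f_i(x_ℓ) + a_i‖x_ℓ‖² + ⟨b_i^ℓ, y − x_ℓ⟩ for all y ∈ ℝⁿ. Define the quadratic cut L_i^ℓ(x) = −a_i‖x‖² + ⟨b_i^ℓ, x⟩ + a_i‖x_ℓ‖² − ⟨b_i^ℓ, x_ℓ⟩ + f_i(x_ℓ) and the outer approximation set O_k = {x ∈ ℝⁿ : L_i^ℓ(x) ≤ 0 for all ℓ ∈ {0,…,k} and i ∈ I(x_ℓ)}. Then: (i) for every ℓ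 ∈ {0,…,k} and every i ∈ I(x_ℓ), L_i^ℓ(x_ℓ) = f_i(x_ℓ) > 0; and (ii) A ⊆ O_k. -/
open scoped RealInnerProductSpace

theorem stmt2 (n m : ℕ) (hm : 1 ≤ m)
    (f : Fin m → EuclideanSpace ℝ (Fin n) → ℝ) (a : Fin m → ℝ) (ha : ∀ i, 0 ≤ a i)
    (hconv : ∀ i, ConvexOn ℝ Set.univ fun x => f i x + a i * ‖x‖ ^ 2)
    (A : Set (EuclideanSpace ℝ (Fin n))) (hA : A = {x | ∀ i, f i x ≤ 0})
    (k : ℕ) (x : ℕ → EuclideanSpace ℝ (Fin n)) (b : Fin m → ℕ → EuclideanSpace ℝ (Fin n))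
    (hb : ∀ ℓ ≤ k, ∀ i, 0 < f i (x ℓ) →
      ∀ y, f i (x ℓ) + a i * ‖x ℓ‖ ^ 2 + ⟪b i ℓ, y - x ℓ⟫ ≤ f i y + a i * ‖y‖ ^ 2)
    (L : Fin m → ℕ → EuclideanSpace ℝ (Fin n) → ℝ)
    (hL : ∀ i ℓ y, L i ℓ y =
      -(a i) * ‖y‖ ^ 2 + ⟪b i ℓ, y⟫ + a i * ‖x ℓ‖ ^ 2 - ⟪b i ℓ, x ℓ⟫ + f i (x ℓ))
    (O : Set (EuclideanSpace ℝ (Fin n)))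
    (hO : O = {y | ∀ ℓ ≤ k, ∀ i, 0 < f i (x ℓ) → L i ℓ y ≤ 0}) :
    (∀ ℓ ≤ k, ∀ i, 0 < f i (x ℓ) → L i ℓ (x ℓ) = f i (x ℓ) ∧ 0 < L i ℓ (x ℓ)) ∧
    A ⊆ O := by
  constructor
  · intro ℓ hℓ i hi
    have h1 : L i ℓ (x ℓ) = f i (x ℓ) := by rw [hL]; ring
    exact ⟨h1, h1 ▸ hi⟩
  · intro y hy
    rw [hA] at hy
    rw [hO]
    intro ℓ hℓ i hi
    have h := hb ℓ hℓ i hi y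
    rw [inner_sub_right] at h
    have : L i ℓ y ≤ f i y := by rw [hL]; linarith
    exact this.trans (hy i)
end

section
/- Under the Cutting spheres algorithm hypotheses, the generated sequence (x_k)_{k∈ℕ} possesses a convergent subsequence, and every sequential cluster point x̄ of (x_k) satisfies x̄ ∈ A and ‖x̄ − z‖² = J*; that is, every cluster point is a global solution of the problem: minimize ‖x − z‖² over x ∈ A. -/
open scoped RealInnerProductSpace
open Filter Topology

/-- Convergence of the Cutting spheres algorithm: the generated sequence has a
convergent subsequence, and every sequential cluster point is a global solution. -/
theorem stmt8 (n m : ℕ) (hm : 1 ≤ m)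
    (f : Fin m → EuclideanSpace ℝ (Fin n) → ℝ) (a : Fin m → ℝ) (ha : ∀ i, 0 ≤ a i)
    (hconv : ∀ i, ConvexOn ℝ Set.univ fun x => f i x + a i * ‖x‖ ^ 2)
    (z : EuclideanSpace ℝ (Fin n)) (J : EuclideanSpace ℝ (Fin n) → ℝ)
    (hJ : ∀ x, J x = ‖x - z‖ ^ 2)
    (A : Set (EuclideanSpace ℝ (Fin n))) (hA : A = {x | ∀ i, f i x ≤ 0}) (hAne : A.Nonempty)
    (Jstar : ℝ) (hJstar : Jstar = ⨅ x : A, J x)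
    (x : ℕ → EuclideanSpace ℝ (Fin n)) (O : ℕ → Set (EuclideanSpace ℝ (Fin n)))
    (b : ℕ → Fin m → EuclideanSpace ℝ (Fin n))
    (hx0 : x 0 = z) (hO0 : O 0 = Set.univ)
    (hstep : ∀ k : ℕ,
      ({i : Fin m | 0 < f i (x k)}.Nonempty →
        (∀ i, 0 < f i (x k) → ∀ y,
          f i (x k) + a i * ‖x k‖ ^ 2 + ⟪b k i, y - x k⟫ ≤ f i y + a i * ‖y‖ ^ 2) ∧
        O (k + 1) = O k ∩ {y | ∀ i, 0 < f i (x k) →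
          -(a i) * ‖y‖ ^ 2 + ⟪b k i, y⟫ + a i * ‖x k‖ ^ 2 - ⟪b k i, x k⟫ + f i (x k) ≤ 0} ∧
        x (k + 1) ∈ O (k + 1) ∧ ∀ y ∈ O (k + 1), J (x (k + 1)) ≤ J y) ∧
      (¬ {i : Fin m | 0 < f i (x k)}.Nonempty →
        O (k + 1) = O k ∧ x (k + 1) = x k)) :
    (∃ (φ : ℕ → ℕ) (xbar : EuclideanSpace ℝ (Fin n)),
      StrictMono φ ∧ Tendsto (x ∘ φ) atTop (𝓝 xbar)) ∧
    (∀ (xbar : EuclideanSpace ℝ (Fin n)) (φ : ℕ → ℕ),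
      StrictMono φ → Tendsto (x ∘ φ) atTop (𝓝 xbar) →
      xbar ∈ A ∧ ‖xbar - z‖ ^ 2 = Jstar) := by
  haveI := hAne.to_subtype
  -- nonnegativity of J
  have hJnn : ∀ w, 0 ≤ J w := fun w => by rw [hJ]; positivity
  -- main invariant
  have key : ∀ k, A ⊆ O k ∧ x k ∈ O k ∧ ∀ y ∈ A, J (x k) ≤ J y := by
    intro k
    induction k with
    | zero =>
      refine ⟨by rw [hO0]; exact Set.subset_univ _, by rw [hO0]; trivial, ?_⟩
      intro y hy
      have : J (x 0) = 0 := by rw [hx0, hJ]; simp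
      rw [this]; exact hJnn y
    | succ k ih =>
      rcases hstep k with ⟨hne, hemp⟩
      by_cases hI : {i : Fin m | 0 < f i (x k)}.Nonempty
      · obtain ⟨hsub, hOeq, hmem, hmin⟩ := hne hI
        have hAsub : A ⊆ O (k + 1) := by
          intro y hy
          rw [hOeq]
          refine ⟨ih.1 hy, ?_⟩
          intro i hi
          have h1 := hsub i hi y
          have h2 : f i y ≤ 0 := by rw [hA] at hy; exact hy i
          have h3 : ⟪b k i, y - x k⟫ = ⟪b k i, y⟫ - ⟪b k i, x k⟫ := inner_sub_right _ _ _
          show -(a i) * ‖y‖ ^ 2 + ⟪b k i, y⟫ + a i * ‖x k‖ ^ 2 - ⟪b k i, x k⟫ + f i (x k) ≤ 0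
          linarith
        exact ⟨hAsub, hmem, fun y hy => hmin y (hAsub hy)⟩
      · obtain ⟨hOeq, hxeq⟩ := hemp hI
        rw [hOeq, hxeq]
        exact ih
  -- O is antitone
  have hOanti : ∀ k, O (k + 1) ⊆ O k := by
    intro k
    rcases hstep k with ⟨hne, hemp⟩
    by_cases hI : {i : Fin m | 0 < f i (x k)}.Nonempty
    · rw [(hne hI).2.1]; exact Set.inter_subset_left
    · rw [(hemp hI).1]
  have hOle : ∀ {k l : ℕ}, k ≤ l → O l ⊆ O k :=
    fun h => antitone_nat_of_succ_le (fun k => Set.le_iff_subset.mpr (hOanti k)) h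
  -- J (x k) ≤ Jstar
  have hJle : ∀ k, J (x k) ≤ Jstar := by
    intro k
    rw [hJstar]
    exact le_ciInf fun ⟨y, hy⟩ => (key k).2.2 y hy
  have hJstar0 : 0 ≤ Jstar := le_trans (hJnn (x 0)) (hJle 0)
  -- continuity of each f i
  have hcont : ∀ i, Continuous (f i) := by
    intro i
    have hg : Continuous fun y : EuclideanSpace ℝ (Fin n) => f i y + a i * ‖y‖ ^ 2 :=
      (hconv i).locallyLipschitz.continuous
    have hn : Continuous fun y : EuclideanSpace ℝ (Fin n) => a i * ‖y‖ ^ 2 :=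
      continuous_const.mul (continuous_norm.pow 2)
    have heq : f i = fun y => (f i y + a i * ‖y‖ ^ 2) - a i * ‖y‖ ^ 2 := by
      ext y; ring
    rw [heq]
    exact hg.sub hn
  have hJcont : Continuous J := by
    have : J = fun w => ‖w - z‖ ^ 2 := funext hJ
    rw [this]; exact ((continuous_id.sub continuous_const).norm.pow 2)
  constructor
  · -- existence of convergent subsequence
    have hmem : ∀ k, x k ∈ Metric.closedBall z (Real.sqrt Jstar) := by
      intro k
      rw [Metric.mem_closedBall, dist_eq_norm]
      have h1 : ‖x k - z‖ ^ 2 ≤ Jstar := by rw [← hJ]; exact hJle k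
      nlinarith [Real.sq_sqrt hJstar0, Real.sqrt_nonneg Jstar, norm_nonneg (x k - z)]
    obtain ⟨xbar, _, φ, hφ, hlim⟩ :=
      (isCompact_closedBall z (Real.sqrt Jstar)).tendsto_subseq hmem
    exact ⟨φ, xbar, hφ, hlim⟩
  · intro xbar φ hφ hlim
    -- cluster point is in A
    have hxbarA : xbar ∈ A := by
      rw [hA]
      by_contra hc
      simp only [Set.mem_setOf_eq, not_forall, not_le] at hc
      obtain ⟨i, hi⟩ := hc
      have hfl : Tendsto (fun j => f i (x (φ j))) atTop (𝓝 (f i xbar)) :=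
        ((hcont i).tendsto xbar).comp hlim
      have hev : ∀ᶠ j in atTop, 0 < f i (x (φ j)) :=
        hfl.eventually (eventually_gt_nhds hi)
      have hkey : ∀ᶠ j in atTop, 2 * f i (x (φ j)) ≤
          2 * a i * ‖x (φ j) - x (φ (j + 1))‖ ^ 2 +
            f i (x (φ j) + (x (φ j) - x (φ (j + 1)))) := by
        filter_upwards [hev] with j hj
        set k := φ j with hk
        set l := φ (j + 1) with hl
        have hkl : k + 1 ≤ l := hφ (Nat.lt_succ_self j)
        have hIk : {i' : Fin m | 0 < f i' (x k)}.Nonempty := ⟨i, hj⟩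
        obtain ⟨hsubg, hOeq, _, _⟩ := (hstep k).1 hIk
        have hxl : x l ∈ O (k + 1) := hOle hkl (key l).2.1
        rw [hOeq] at hxl
        have hcut := hxl.2 i hj
        have hsg := hsubg i hj (x k + (x k - x l))
        have e2 : x k + (x k - x l) - x k = x k - x l := by abel
        rw [e2] at hsg
        have e3 : ⟪b k i, x k - x l⟫ = ⟪b k i, x k⟫ - ⟪b k i, x l⟫ := inner_sub_right _ _ _
        rw [e3] at hsg
        have e4 : ‖x k + (x k - x l)‖ ^ 2 =
            2 * ‖x k - x l‖ ^ 2 + 2 * ‖x k‖ ^ 2 - ‖x l‖ ^ 2 := by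
          have p1 := norm_add_sq_real (x k) (x k - x l)
          have p2 := norm_sub_sq_real (x k) (x l)
          have p3 : ⟪x k, x k - x l⟫ = ⟪x k, x k⟫ - ⟪x k, x l⟫ := inner_sub_right _ _ _
          have p4 : ⟪x k, x k⟫ = ‖x k‖ ^ 2 := real_inner_self_eq_norm_sq _
          rw [p1, p3, p4, p2]; ring
        rw [e4] at hsg
        have hai := ha i
        nlinarith [hcut, hsg]
      -- pass to the limit
      have t2 : Tendsto (fun j => x (φ (j + 1))) atTop (𝓝 xbar) :=
        hlim.comp (tendsto_add_atTop_nat 1)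
      have t3 : Tendsto (fun j => x (φ j) - x (φ (j + 1))) atTop (𝓝 0) := by
        have := hlim.sub t2
        simpa using this
      have t4 : Tendsto (fun j => ‖x (φ j) - x (φ (j + 1))‖ ^ 2) atTop (𝓝 0) := by
        have := (t3.norm).pow 2
        simpa using this
      have t5 : Tendsto (fun j => x (φ j) + (x (φ j) - x (φ (j + 1)))) atTop (𝓝 xbar) := by
        have := hlim.add t3
        simpa using this
      have t6 : Tendsto (fun j => 2 * a i * ‖x (φ j) - x (φ (j + 1))‖ ^ 2 +
          f i (x (φ j) + (x (φ j) - x (φ (j + 1))))) atTop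
          (𝓝 (2 * a i * 0 + f i xbar)) :=
        (t4.const_mul (2 * a i)).add (((hcont i).tendsto xbar).comp t5)
      have t1 : Tendsto (fun j => 2 * f i (x (φ j))) atTop (𝓝 (2 * f i xbar)) :=
        hfl.const_mul 2
      have hfin := le_of_tendsto_of_tendsto t1 t6 hkey
      simp only [mul_zero, zero_add] at hfin
      linarith
    refine ⟨hxbarA, ?_⟩
    have h1 : Tendsto (fun j => J (x (φ j))) atTop (𝓝 (J xbar)) :=
      (hJcont.tendsto xbar).comp hlim
    have hle : J xbar ≤ Jstar :=
      le_of_tendsto h1 (Filter.Eventually.of_forall fun j => hJle (φ j))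
    have hge : Jstar ≤ J xbar := by
      rw [hJstar]
      have hbdd : BddBelow (Set.range fun y : A => J y) :=
        ⟨0, by rintro r ⟨y, rfl⟩; exact hJnn y⟩
      exact ciInf_le hbdd ⟨xbar, hxbarA⟩
    rw [← hJ]
    linarith
end

section
/- Under the Cutting spheres algorithm hypotheses, if the problem of minimizing ‖x − z‖² over A has a unique solution x̂, then the generated sequence (x_k)_{k∈ℕ} converges to x̂. -/
open scoped RealInnerProductSpace
open Filter Topology

/-- If the problem has a unique solution, the Cutting spheres sequence converges to it. -/
theorem stmt9 (n m : ℕ) (hm : 1 ≤ m)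
    (f : Fin m → EuclideanSpace ℝ (Fin n) → ℝ) (a : Fin m → ℝ) (ha : ∀ i, 0 ≤ a i)
    (hconv : ∀ i, ConvexOn ℝ Set.univ fun x => f i x + a i * ‖x‖ ^ 2)
    (z : EuclideanSpace ℝ (Fin n)) (J : EuclideanSpace ℝ (Fin n) → ℝ)
    (hJ : ∀ x, J x = ‖x - z‖ ^ 2)
    (A : Set (EuclideanSpace ℝ (Fin n))) (hA : A = {x | ∀ i, f i x ≤ 0}) (hAne : A.Nonempty)
    (Jstar : ℝ) (hJstar : Jstar = ⨅ x : A, J x)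
    (x : ℕ → EuclideanSpace ℝ (Fin n)) (O : ℕ → Set (EuclideanSpace ℝ (Fin n)))
    (b : ℕ → Fin m → EuclideanSpace ℝ (Fin n))
    (hx0 : x 0 = z) (hO0 : O 0 = Set.univ)
    (hstep : ∀ k : ℕ,
      ({i : Fin m | 0 < f i (x k)}.Nonempty →
        (∀ i, 0 < f i (x k) → ∀ y,
          f i (x k) + a i * ‖x k‖ ^ 2 + ⟪b k i, y - x k⟫ ≤ f i y + a i * ‖y‖ ^ 2) ∧
        O (k + 1) = O k ∩ {y | ∀ i, 0 < f i (x k) →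
          -(a i) * ‖y‖ ^ 2 + ⟪b k i, y⟫ + a i * ‖x k‖ ^ 2 - ⟪b k i, x k⟫ + f i (x k) ≤ 0} ∧
        x (k + 1) ∈ O (k + 1) ∧ ∀ y ∈ O (k + 1), J (x (k + 1)) ≤ J y) ∧
      (¬ {i : Fin m | 0 < f i (x k)}.Nonempty →
        O (k + 1) = O k ∧ x (k + 1) = x k))
    (xhat : EuclideanSpace ℝ (Fin n))
    (huniq : xhat ∈ A ∧ (∀ y ∈ A, J xhat ≤ J y) ∧
      ∀ w, w ∈ A → (∀ y ∈ A, J w ≤ J y) → w = xhat) :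
    Tendsto x atTop (𝓝 xhat) := by
  classical
  have hRnn : (0:ℝ) ≤ ‖xhat - z‖ := norm_nonneg _
  set R : ℝ := ‖xhat - z‖ with hRdef
  -- continuity of J
  have hJcont : Continuous J := by
    have hJe : J = fun x => ‖x - z‖ ^ 2 := funext hJ
    rw [hJe]; fun_prop
  -- monotonicity of O
  have hOmono : ∀ k, O (k + 1) ⊆ O k := by
    intro k
    by_cases hne : ({i : Fin m | 0 < f i (x k)}).Nonempty
    · obtain ⟨_, h2, _, _⟩ := (hstep k).1 hne
      rw [h2]; exact Set.inter_subset_left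
    · rw [((hstep k).2 hne).1]
  have hOanti : Antitone O := antitone_nat_of_succ_le hOmono
  -- A is contained in every O k
  have hAO : ∀ k, A ⊆ O k := by
    intro k
    induction k with
    | zero => rw [hO0]; exact Set.subset_univ _
    | succ k ih =>
      by_cases hne : ({i : Fin m | 0 < f i (x k)}).Nonempty
      · obtain ⟨h1, h2, _, _⟩ := (hstep k).1 hne
        rw [h2]
        intro y hy
        refine ⟨ih hy, ?_⟩
        intro i hpos
        have hsub := h1 i hpos y
        have hfy : f i y ≤ 0 := by
          have : y ∈ {x | ∀ i, f i x ≤ 0} := hA ▸ hy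
          exact this i
        have hip : (⟪b k i, y - x k⟫ : ℝ) = ⟪b k i, y⟫ - ⟪b k i, x k⟫ :=
          inner_sub_right _ _ _
        linarith
      · rw [((hstep k).2 hne).1]; exact ih
  -- x k is a minimizer of J over O k, for k ≥ 1
  have hminaux : ∀ k : ℕ, x (k+1) ∈ O (k+1) ∧ ∀ y ∈ O (k+1), J (x (k+1)) ≤ J y := by
    intro k
    induction k with
    | zero =>
      by_cases hne : ({i : Fin m | 0 < f i (x 0)}).Nonempty
      · obtain ⟨_, _, h3, h4⟩ := (hstep 0).1 hne
        exact ⟨h3, h4⟩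
      · obtain ⟨h2, h3⟩ := (hstep 0).2 hne
        rw [h2, h3, hO0, hx0]
        refine ⟨trivial, ?_⟩
        intro y _
        rw [hJ, hJ]
        simpa using sq_nonneg ‖y - z‖
    | succ k ih =>
      by_cases hne : ({i : Fin m | 0 < f i (x (k+1))}).Nonempty
      · obtain ⟨_, _, h3, h4⟩ := (hstep (k+1)).1 hne
        exact ⟨h3, h4⟩
      · obtain ⟨h2, h3⟩ := (hstep (k+1)).2 hne
        rw [h2, h3]; exact ih
  have hmem : ∀ k : ℕ, 1 ≤ k → x k ∈ O k ∧ ∀ y ∈ O k, J (x k) ≤ J y := by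
    intro k hk
    obtain ⟨j, rfl⟩ := Nat.exists_eq_succ_of_ne_zero (by omega : k ≠ 0)
    exact hminaux j
  -- the sequence is bounded
  have hJle : ∀ k : ℕ, 1 ≤ k → J (x k) ≤ J xhat :=
    fun k hk => (hmem k hk).2 xhat (hAO k huniq.1)
  have hxball : ∀ k, x k ∈ Metric.closedBall z R := by
    intro k
    rcases Nat.eq_zero_or_pos k with rfl | hk
    · rw [hx0]; exact Metric.mem_closedBall_self hRnn
    · have h1 := hJle k hk
      rw [hJ, hJ] at h1
      have h2 : ‖x k - z‖ ≤ R := by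
        have := (pow_le_pow_iff_left₀ (norm_nonneg (x k - z)) hRnn (two_ne_zero)).mp h1
        exact this
      rw [Metric.mem_closedBall, dist_eq_norm]; exact h2
  -- continuity of the functions
  set g : Fin m → EuclideanSpace ℝ (Fin n) → ℝ := fun i x => f i x + a i * ‖x‖ ^ 2 with hgdef
  have hgcont : ∀ i, Continuous (g i) := by
    intro i
    exact continuousOn_univ.mp ((hconv i).continuousOn isOpen_univ)
  have hfcont : ∀ i, Continuous (f i) := by
    intro i
    have : f i = fun x => g i x - a i * ‖x‖ ^ 2 := by
      funext w; simp [hgdef]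
    rw [this]
    fun_prop
  -- bound on the subgradients
  have hK'comp : IsCompact (Metric.closedBall z (R+1)) := isCompact_closedBall _ _
  have hzK' : z ∈ Metric.closedBall z (R+1) := Metric.mem_closedBall_self (by linarith)
  have hBex : ∀ i, ∃ Bi : ℝ, ∀ w ∈ Metric.closedBall z (R+1), |g i w| ≤ Bi := by
    intro i
    obtain ⟨Bi, hBi⟩ := hK'comp.exists_bound_of_continuousOn (hgcont i).continuousOn
    exact ⟨Bi, fun w hw => by simpa using hBi w hw⟩
  choose B hB using hBex
  haveI : Nonempty (Fin m) := ⟨⟨0, hm⟩⟩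
  set C : ℝ := Finset.univ.sup' Finset.univ_nonempty (fun i => 2 * B i) with hCdef
  have hBnn : ∀ i, 0 ≤ B i := fun i => le_trans (abs_nonneg _) (hB i z hzK')
  have hC2B : ∀ i, 2 * B i ≤ C := fun i => Finset.le_sup' (fun i => 2 * B i) (Finset.mem_univ i)
  have hCnn : 0 ≤ C := le_trans (by have := hBnn ⟨0, hm⟩; linarith) (hC2B ⟨0, hm⟩)
  have hbbd : ∀ k i, ({i' : Fin m | 0 < f i' (x k)}).Nonempty → 0 < f i (x k) →
      ‖b k i‖ ≤ C := by
    intro k i hne hpos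
    obtain ⟨h1, _, _, _⟩ := (hstep k).1 hne
    by_cases hb0 : b k i = 0
    · rw [hb0, norm_zero]; exact hCnn
    · have hbn : (0:ℝ) < ‖b k i‖ := norm_pos_iff.mpr hb0
      set y : EuclideanSpace ℝ (Fin n) := x k + (‖b k i‖)⁻¹ • (b k i) with hydef
      have hyx : y - x k = (‖b k i‖)⁻¹ • (b k i) := by rw [hydef]; abel
      have hipy : (⟪b k i, y - x k⟫ : ℝ) = ‖b k i‖ := by
        rw [hyx, real_inner_smul_right, real_inner_self_eq_norm_sq]
        field_simp
      have hyK' : y ∈ Metric.closedBall z (R+1) := by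
        have hxk : ‖x k - z‖ ≤ R := by
          have := hxball k; rwa [Metric.mem_closedBall, dist_eq_norm] at this
        have hsm : ‖(‖b k i‖)⁻¹ • (b k i)‖ = 1 := by
          rw [norm_smul, norm_inv, norm_norm]
          field_simp
        rw [Metric.mem_closedBall, dist_eq_norm]
        calc ‖y - z‖ = ‖(x k - z) + (‖b k i‖)⁻¹ • (b k i)‖ := by rw [hydef]; congr 1; abel
          _ ≤ ‖x k - z‖ + ‖(‖b k i‖)⁻¹ • (b k i)‖ := norm_add_le _ _
          _ ≤ R + 1 := by rw [hsm]; linarith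
      have hxkK' : x k ∈ Metric.closedBall z (R+1) :=
        Metric.closedBall_subset_closedBall (by linarith) (hxball k)
      have hsub := h1 i hpos y
      rw [hipy] at hsub
      have hgy := hB i y hyK'
      have hgxk := hB i (x k) hxkK'
      have h2Bi := hC2B i
      have e1 : f i y + a i * ‖y‖ ^ 2 = g i y := rfl
      have e2 : f i (x k) + a i * ‖x k‖ ^ 2 = g i (x k) := rfl
      rw [abs_le] at hgy hgxk
      -- ‖b‖ ≤ g i y - g i (x k) ≤ 2 * B i ≤ C
      nlinarith [hsub, hgy.1, hgy.2, hgxk.1, hgxk.2]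
  -- main argument via subsequences
  apply tendsto_of_subseq_tendsto
  intro ns hns
  obtain ⟨p, hpball, φ, hφ, hlim⟩ :=
    (isCompact_closedBall z R).tendsto_subseq (x := fun j => x (ns j)) (fun j => hxball (ns j))
  refine ⟨φ, ?_⟩
  set ψ : ℕ → ℕ := fun j => ns (φ j) with hψdef
  have hψtop : Tendsto ψ atTop atTop := hns.comp hφ.tendsto_atTop
  have hxψ : Tendsto (fun j => x (ψ j)) atTop (𝓝 p) := hlim
  -- p ∈ A
  have hpA : p ∈ A := by
    rw [hA]
    intro i
    by_contra hlt
    push_neg at hlt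
    set ε : ℝ := f i p with hεdef
    have hε : 0 < ε := hlt
    set D : ℝ := 2 * a i * (‖z‖ + R) + C with hDdef
    have hD0 : 0 ≤ D := by
      have := norm_nonneg z
      have := ha i
      nlinarith
    set δ : ℝ := ε / (4 * (D + 1)) with hδdef
    have hδpos : 0 < δ := by positivity
    have hfψ : Tendsto (fun j => f i (x (ψ j))) atTop (𝓝 ε) :=
      ((hfcont i).tendsto p).comp hxψ
    have ev1 : ∀ᶠ j in atTop, ε / 2 < f i (x (ψ j)) :=
      hfψ.eventually (eventually_gt_nhds (by linarith))
    have ev2 : ∀ᶠ j in atTop, dist (x (ψ j)) p < δ :=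
      Metric.tendsto_nhds.mp hxψ δ hδpos
    obtain ⟨j, hj1, hj2⟩ := (ev1.and ev2).exists
    obtain ⟨j', hj'1, hj'2⟩ := ((hψtop.eventually_ge_atTop (ψ j + 1)).and ev2).exists
    set k := ψ j with hkdef
    set l := ψ j' with hldef
    have hposk : 0 < f i (x k) := lt_trans (by linarith) hj1
    have hne : ({i' : Fin m | 0 < f i' (x k)}).Nonempty := ⟨i, hposk⟩
    obtain ⟨h1, h2, _, _⟩ := (hstep k).1 hne
    have hxlO : x l ∈ O (k + 1) := by
      have hl1 : 1 ≤ l := by omega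
      exact hOanti hj'1 (hmem l hl1).1
    rw [h2] at hxlO
    have hcut := hxlO.2 i hposk
    -- bounds
    have hbC := hbbd k i hne hposk
    set N : ℝ := ‖x l - x k‖ with hNdef
    have hNnn : 0 ≤ N := norm_nonneg _
    have hN2δ : N < 2 * δ := by
      have h1' : dist (x l) (x k) ≤ dist (x l) p + dist (x k) p := dist_triangle_right _ _ _
      rw [dist_eq_norm] at h1'
      calc N ≤ dist (x l) p + dist (x k) p := h1'
        _ < δ + δ := add_lt_add hj'2 hj2
        _ = 2 * δ := by ring
    have hzR : ∀ w, w ∈ Metric.closedBall z R → ‖w‖ ≤ ‖z‖ + R := by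
      intro w hw
      rw [Metric.mem_closedBall, dist_eq_norm] at hw
      calc ‖w‖ = ‖(w - z) + z‖ := by congr 1; abel
        _ ≤ ‖w - z‖ + ‖z‖ := norm_add_le _ _
        _ ≤ ‖z‖ + R := by linarith
    have hxkn : ‖x k‖ ≤ ‖z‖ + R := hzR _ (hxball k)
    have hxln : ‖x l‖ ≤ ‖z‖ + R := hzR _ (hxball l)
    have hdiff : ‖x l‖ - ‖x k‖ ≤ N := le_trans (le_abs_self _) (abs_norm_sub_norm_le _ _)
    have hsum0 : 0 ≤ ‖x l‖ + ‖x k‖ := by positivity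
    have hsumle : ‖x l‖ + ‖x k‖ ≤ 2 * (‖z‖ + R) := by linarith
    have hsq : ‖x l‖ ^ 2 - ‖x k‖ ^ 2 = (‖x l‖ - ‖x k‖) * (‖x l‖ + ‖x k‖) := by ring
    have hsqle : ‖x l‖ ^ 2 - ‖x k‖ ^ 2 ≤ N * (2 * (‖z‖ + R)) := by
      rw [hsq]
      exact mul_le_mul hdiff hsumle hsum0 hNnn
    have hinner : (⟪b k i, x k⟫ : ℝ) - ⟪b k i, x l⟫ = ⟪b k i, x k - x l⟫ :=
      (inner_sub_right _ _ _).symm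
    have hinle : (⟪b k i, x k - x l⟫ : ℝ) ≤ C * N := by
      calc (⟪b k i, x k - x l⟫ : ℝ) ≤ ‖b k i‖ * ‖x k - x l‖ := real_inner_le_norm _ _
        _ = ‖b k i‖ * N := by rw [norm_sub_rev]
        _ ≤ C * N := mul_le_mul_of_nonneg_right hbC hNnn
    -- from the cut: f i (x k) ≤ a i * (‖x l‖² - ‖x k‖²) + ⟪b k i, x k - x l⟫
    have hmain : f i (x k) ≤ a i * (‖x l‖ ^ 2 - ‖x k‖ ^ 2) + ⟪b k i, x k - x l⟫ := by
      rw [← hinner]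
      linarith [hcut]
    have haux : a i * (‖x l‖ ^ 2 - ‖x k‖ ^ 2) ≤ a i * (N * (2 * (‖z‖ + R))) :=
      mul_le_mul_of_nonneg_left hsqle (ha i)
    have hfinal : f i (x k) ≤ N * D := by
      have : a i * (N * (2 * (‖z‖ + R))) + C * N = N * D := by rw [hDdef]; ring
      linarith
    have hND : N * D ≤ 2 * δ * D := mul_le_mul_of_nonneg_right (le_of_lt hN2δ) hD0
    have hδD : δ * (D + 1) = ε / 4 := by
      rw [hδdef]; field_simp
    clear_value ε D δ N
    have h5 : 2 * δ * (D + 1) = ε / 2 := by linarith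
    linarith [hj1, hfinal, hND, h5, hδpos]
  -- p minimizes J over A, hence p = xhat
  have hJp : J p ≤ J xhat := by
    have hev : ∀ᶠ j in atTop, J (x (ψ j)) ≤ J xhat := by
      filter_upwards [hψtop.eventually_ge_atTop 1] with j hj
      exact hJle (ψ j) hj
    exact le_of_tendsto ((hJcont.tendsto p).comp hxψ) hev
  have hp : p = xhat :=
    huniq.2.2 p hpA (fun y hy => le_trans hJp (huniq.2.1 y hy))
  rw [← hp]
  exact hlim
end

section
/- Under the Cutting spheres algorithm hypotheses, the sequence (J(x_k))_{k∈ℕ} = (‖x_k − z‖²)_{k∈ℕ} is nondecreasing, bounded above by J*, and converges to J*. -/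
open scoped RealInnerProductSpace
open Filter Topology

/-- The objective values of the Cutting spheres sequence are nondecreasing,
bounded above by the optimal value, and converge to it. -/
theorem stmt10 (n m : ℕ) (hm : 1 ≤ m)
    (f : Fin m → EuclideanSpace ℝ (Fin n) → ℝ) (a : Fin m → ℝ) (ha : ∀ i, 0 ≤ a i)
    (hconv : ∀ i, ConvexOn ℝ Set.univ fun x => f i x + a i * ‖x‖ ^ 2)
    (z : EuclideanSpace ℝ (Fin n)) (J : EuclideanSpace ℝ (Fin n) → ℝ)
    (hJ : ∀ x, J x = ‖x - z‖ ^ 2)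
    (A : Set (EuclideanSpace ℝ (Fin n))) (hA : A = {x | ∀ i, f i x ≤ 0}) (hAne : A.Nonempty)
    (Jstar : ℝ) (hJstar : Jstar = ⨅ x : A, J x)
    (x : ℕ → EuclideanSpace ℝ (Fin n)) (O : ℕ → Set (EuclideanSpace ℝ (Fin n)))
    (b : ℕ → Fin m → EuclideanSpace ℝ (Fin n))
    (hx0 : x 0 = z) (hO0 : O 0 = Set.univ)
    (hstep : ∀ k : ℕ,
      ({i : Fin m | 0 < f i (x k)}.Nonempty →
        (∀ i, 0 < f i (x k) → ∀ y,
          f i (x k) + a i * ‖x k‖ ^ 2 + ⟪b k i, y - x k⟫ ≤ f i y + a i * ‖y‖ ^ 2) ∧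
        O (k + 1) = O k ∩ {y | ∀ i, 0 < f i (x k) →
          -(a i) * ‖y‖ ^ 2 + ⟪b k i, y⟫ + a i * ‖x k‖ ^ 2 - ⟪b k i, x k⟫ + f i (x k) ≤ 0} ∧
        x (k + 1) ∈ O (k + 1) ∧ ∀ y ∈ O (k + 1), J (x (k + 1)) ≤ J y) ∧
      (¬ {i : Fin m | 0 < f i (x k)}.Nonempty →
        O (k + 1) = O k ∧ x (k + 1) = x k)) :
    Monotone (fun k => J (x k)) ∧ (∀ k, J (x k) ≤ Jstar) ∧
    Tendsto (fun k => J (x k)) atTop (𝓝 Jstar) := by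
  have hJ0 : ∀ y, 0 ≤ J y := fun y => by rw [hJ]; positivity
  -- O is decreasing
  have hOdec : ∀ k, O (k + 1) ⊆ O k := by
    intro k
    rcases Set.eq_empty_or_nonempty {i : Fin m | 0 < f i (x k)} with he | hne
    · rw [((hstep k).2 (by simp [he])).1]
    · rw [((hstep k).1 hne).2.1]; exact Set.inter_subset_left
  have hOanti : ∀ k l, k ≤ l → O l ⊆ O k := by
    intro k l hkl
    induction l with
    | zero => simp_all
    | succ l ih =>
      rcases Nat.lt_or_ge k (l+1) with h | h
      · exact (ih (Nat.lt_succ_iff.mp h)).trans' (hOdec l)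
      · have : k = l + 1 := le_antisymm hkl h
        subst this; exact subset_rfl
  -- x k ∈ O k and minimizes J over O k
  have hxk : ∀ k, x k ∈ O k ∧ ∀ y ∈ O k, J (x k) ≤ J y := by
    intro k
    induction k with
    | zero =>
      refine ⟨by simp [hO0], fun y _ => ?_⟩
      rw [hx0, hJ]
      simp only [sub_self, norm_zero]
      simpa using hJ0 y
    | succ k ih =>
      rcases em {i : Fin m | 0 < f i (x k)}.Nonempty with hne | he
      · obtain ⟨_, _, hmem, hmin⟩ := (hstep k).1 hne
        exact ⟨hmem, hmin⟩
      · obtain ⟨hOe, hxe⟩ := (hstep k).2 he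
        rw [hxe, hOe]; exact ih
  -- A ⊆ O k for all k
  have hAO : ∀ k, A ⊆ O k := by
    intro k
    induction k with
    | zero => rw [hO0]; exact Set.subset_univ _
    | succ k ih =>
      rcases em {i : Fin m | 0 < f i (x k)}.Nonempty with hne | he
      · obtain ⟨hsub, hOeq, _, _⟩ := (hstep k).1 hne
        rw [hOeq]
        intro y hy
        refine ⟨ih hy, fun i hi => ?_⟩
        have h1 := hsub i hi y
        have hfy : f i y ≤ 0 := by rw [hA] at hy; exact hy i
        rw [inner_sub_right] at h1
        linarith
      · rw [((hstep k).2 he).1]; exact ih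
  -- monotone
  have hmono : Monotone fun k => J (x k) := by
    apply monotone_nat_of_le_succ
    intro k
    exact (hxk k).2 _ (hOdec k (hxk (k+1)).1)
  -- bound
  have hub : ∀ k, J (x k) ≤ Jstar := by
    intro k
    rw [hJstar]
    haveI : Nonempty ↑A := hAne.to_subtype
    exact le_ciInf fun ⟨y, hy⟩ => (hxk k).2 y (hAO k hy)
  refine ⟨hmono, hub, ?_⟩
  -- convergence
  have hJstar0 : 0 ≤ Jstar := by
    rw [hJstar]; exact Real.iInf_nonneg fun y => hJ0 _
  have hball : ∀ k, x k ∈ Metric.closedBall z (Real.sqrt Jstar) := by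
    intro k
    rw [Metric.mem_closedBall, dist_eq_norm]
    have h1 : ‖x k - z‖ ^ 2 ≤ Jstar := by rw [← hJ]; exact hub k
    nlinarith [Real.sq_sqrt hJstar0, Real.sqrt_nonneg Jstar, norm_nonneg (x k - z),
      sq_nonneg (‖x k - z‖ - Real.sqrt Jstar)]
  obtain ⟨w, hwmem, φ, hφ, hφtend⟩ :=
    (isCompact_closedBall z (Real.sqrt Jstar)).tendsto_subseq hball
  -- continuity
  have hgc : ∀ i, Continuous fun y : EuclideanSpace ℝ (Fin n) => f i y + a i * ‖y‖ ^ 2 := by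
    intro i
    exact continuousOn_univ.mp ((hconv i).continuousOn isOpen_univ)
  have hnc : Continuous fun y : EuclideanSpace ℝ (Fin n) => ‖y‖ ^ 2 := by fun_prop
  have hfc : ∀ i, Continuous (f i) := by
    intro i
    have : Continuous fun y : EuclideanSpace ℝ (Fin n) =>
        (f i y + a i * ‖y‖ ^ 2) - a i * ‖y‖ ^ 2 := (hgc i).sub (continuous_const.mul hnc)
    simpa using this
  have hJc : Continuous J := by
    have : J = fun y => ‖y - z‖ ^ 2 := funext hJ
    rw [this]; fun_prop
  -- the limit point is feasible
  have hwA : w ∈ A := by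
    rw [hA]
    intro i
    by_contra hpos
    push_neg at hpos
    have hfpos : 0 < f i w := hpos
    have htf : Tendsto (fun j => f i (x (φ j))) atTop (𝓝 (f i w)) :=
      ((hfc i).tendsto w).comp hφtend
    have hev : ∀ᶠ j in atTop, 0 < f i (x (φ j)) := htf.eventually (eventually_gt_nhds hfpos)
    -- key eventual inequality
    have key : ∀ᶠ j in atTop, 2 * f i (x (φ j)) ≤
        a i * ‖w‖ ^ 2 - 2 * a i * ‖x (φ j)‖ ^ 2 +
          (f i ((2:ℝ) • x (φ j) - w) + a i * ‖(2:ℝ) • x (φ j) - w‖ ^ 2) := by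
      filter_upwards [hev] with j hj
      set k := φ j with hk
      have hne : {i' : Fin m | 0 < f i' (x k)}.Nonempty := ⟨i, hj⟩
      obtain ⟨hsub, hOeq, _, _⟩ := (hstep k).1 hne
      -- w satisfies the cut
      have hcutw : -(a i) * ‖w‖ ^ 2 + ⟪b k i, w⟫ + a i * ‖x k‖ ^ 2 - ⟪b k i, x k⟫
          + f i (x k) ≤ 0 := by
        have hclim : Tendsto (fun j' => -(a i) * ‖x (φ j')‖ ^ 2 + ⟪b k i, x (φ j')⟫
            + a i * ‖x k‖ ^ 2 - ⟪b k i, x k⟫ + f i (x k)) atTop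
            (𝓝 (-(a i) * ‖w‖ ^ 2 + ⟪b k i, w⟫ + a i * ‖x k‖ ^ 2 - ⟪b k i, x k⟫ + f i (x k))) := by
          have hc : Continuous fun y : EuclideanSpace ℝ (Fin n) =>
              -(a i) * ‖y‖ ^ 2 + ⟪b k i, y⟫ + a i * ‖x k‖ ^ 2 - ⟪b k i, x k⟫ + f i (x k) := by
            apply Continuous.add
            apply Continuous.sub
            apply Continuous.add
            apply Continuous.add
            · exact continuous_const.mul hnc
            · exact continuous_const.inner continuous_id
            all_goals fun_prop
          exact (hc.tendsto w).comp hφtend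
        refine le_of_tendsto hclim ?_
        filter_upwards [eventually_ge_atTop (k+1)] with j' hj'
        have hmem : x (φ j') ∈ O (k + 1) :=
          hOanti (k+1) (φ j') (hj'.trans (hφ.le_apply)) (hxk (φ j')).1
        rw [hOeq] at hmem
        exact hmem.2 i hj
      -- subgradient inequality at y = 2 x k - w
      have hsg := hsub i hj ((2:ℝ) • x k - w)
      have hyx : (2:ℝ) • x k - w - x k = x k - w := by
        rw [two_smul]; abel
      rw [hyx, inner_sub_right] at hsg
      linarith
    -- pass to the limit
    have hlhs : Tendsto (fun j => 2 * f i (x (φ j))) atTop (𝓝 (2 * f i w)) :=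
      htf.const_mul 2
    have hyt : Tendsto (fun j => (2:ℝ) • x (φ j) - w) atTop (𝓝 w) := by
      have h2 : Tendsto (fun j => (2:ℝ) • x (φ j) - w) atTop (𝓝 ((2:ℝ) • w - w)) :=
        (hφtend.const_smul (2:ℝ)).sub tendsto_const_nhds
      have : (2:ℝ) • w - w = w := by rw [two_smul]; abel
      rwa [this] at h2
    have hrhs : Tendsto (fun j => a i * ‖w‖ ^ 2 - 2 * a i * ‖x (φ j)‖ ^ 2 +
        (f i ((2:ℝ) • x (φ j) - w) + a i * ‖(2:ℝ) • x (φ j) - w‖ ^ 2)) atTop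
        (𝓝 (a i * ‖w‖ ^ 2 - 2 * a i * ‖w‖ ^ 2 + (f i w + a i * ‖w‖ ^ 2))) := by
      refine Tendsto.add (Tendsto.sub tendsto_const_nhds ?_) (((hgc i).tendsto w).comp hyt)
      exact ((continuous_const.mul hnc).tendsto w).comp hφtend
    have hfin : 2 * f i w ≤ a i * ‖w‖ ^ 2 - 2 * a i * ‖w‖ ^ 2 + (f i w + a i * ‖w‖ ^ 2) :=
      le_of_tendsto_of_tendsto hlhs hrhs key
    linarith
  -- conclude
  have hBdd : BddAbove (Set.range fun k => J (x k)) := ⟨Jstar, by rintro _ ⟨k, rfl⟩; exact hub k⟩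
  have htendL : Tendsto (fun k => J (x k)) atTop (𝓝 (⨆ k, J (x k))) :=
    tendsto_atTop_ciSup hmono hBdd
  have hLle : (⨆ k, J (x k)) ≤ Jstar := ciSup_le hub
  have hJw : J w = ⨆ k, J (x k) := by
    have h1 : Tendsto (fun j => J (x (φ j))) atTop (𝓝 (J w)) := (hJc.tendsto w).comp hφtend
    have h2 : Tendsto (fun j => J (x (φ j))) atTop (𝓝 (⨆ k, J (x k))) :=
      htendL.comp hφ.tendsto_atTop
    exact tendsto_nhds_unique h1 h2
  have hgeL : Jstar ≤ ⨆ k, J (x k) := by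
    rw [← hJw, hJstar]
    exact ciInf_le ⟨0, by rintro _ ⟨y, rfl⟩; exact hJ0 _⟩ (⟨w, hwA⟩ : A)
  have : (⨆ k, J (x k)) = Jstar := le_antisymm hLle hgeL
  rwa [this] at htendL
end

section
/- Let m ≥ 1 and, for i ∈ I = {1,…,m}, let f_i : ℝⁿ → ℝ and a_i ≥ 0 be such that x ↦ f_i(x) + a_i‖x‖² is convex on ℝⁿ. Let z ∈ ℝⁿ, J(x) = ‖x − z‖², and A = {x ∈ ℝⁿ : f_i(x) ≤ 0 for all i ∈ I}. Let O ⊆ ℝⁿ be a set with A ⊆ O and let x̄ ∈ O attain the minimum of J over O. For every i ∈ I(x̄) = {i ∈ I : f_i(x̄) > 0}, let b_i ∈ ℝⁿ satisfy f_i(y) + a_i‖y‖² ≥ f_i(x̄) + a_i‖x̄‖² + ⟨b_i, y − x̄⟩ for all y ∈ ℝⁿ. Then A is contained in the restart set {x ∈ ℝⁿ : −a_i‖x‖² + ⟨b_i, x⟩ + a_i‖x̄‖² − ⟨b_i, x̄⟩ + f_i(x̄) ≤ 0 for all i ∈ I(x̄) and J(x) ≥ J(x̄)}. -/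
open scoped RealInnerProductSpace

theorem stmt11 (n m : ℕ) (hm : 1 ≤ m)
    (f : Fin m → EuclideanSpace ℝ (Fin n) → ℝ) (a : Fin m → ℝ) (ha : ∀ i, 0 ≤ a i)
    (hconv : ∀ i, ConvexOn ℝ Set.univ fun x => f i x + a i * ‖x‖ ^ 2)
    (z : EuclideanSpace ℝ (Fin n)) (J : EuclideanSpace ℝ (Fin n) → ℝ)
    (hJ : ∀ x, J x = ‖x - z‖ ^ 2)
    (A : Set (EuclideanSpace ℝ (Fin n))) (hA : A = {x | ∀ i, f i x ≤ 0})
    (O : Set (EuclideanSpace ℝ (Fin n))) (hAO : A ⊆ O)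
    (xbar : EuclideanSpace ℝ (Fin n)) (hxbar : xbar ∈ O) (hmin : ∀ y ∈ O, J xbar ≤ J y)
    (b : Fin m → EuclideanSpace ℝ (Fin n))
    (hb : ∀ i, 0 < f i xbar →
      ∀ y, f i xbar + a i * ‖xbar‖ ^ 2 + ⟪b i, y - xbar⟫ ≤ f i y + a i * ‖y‖ ^ 2) :
    A ⊆ {y | (∀ i, 0 < f i xbar →
      -(a i) * ‖y‖ ^ 2 + ⟪b i, y⟫ + a i * ‖xbar‖ ^ 2 - ⟪b i, xbar⟫ + f i xbar ≤ 0) ∧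
      J xbar ≤ J y} := by
  intro x hx
  rw [hA] at hx
  refine ⟨fun i hi => ?_, hmin x (hAO (hA ▸ hx))⟩
  have h := hb i hi x
  have hfx := hx i
  rw [inner_sub_right] at h
  nlinarith
end

section
/- Let m ≥ 1 and, for i ∈ I = {1,…,m}, let f̃_i : ℝⁿ → ℝ be convex and let ρ_i ≥ 0; set f_i(x) = f̃_i(x) − (ρ_i/2)‖x‖². Let Ã = {x ∈ ℝⁿ : f̃_i(x) ≤ 0 for all i} and A = {x ∈ ℝⁿ : f_i(x) ≤ 0 for all i}; note Ã ⊆ A. Assume that the interior of Ã equals {x ∈ ℝⁿ : f̃_i(x) < 0 for all i} and that this set is nonempty, and assume there exists κ > 0 such that for every x̄ in the boundary of Ã there exists ā in the interior of Ã with ‖x̄ − ā‖ ≤ κ · min_{1≤i≤m}(−f̃_i(ā)). Then there exists τ > 0 such that for all x ∈ ℝⁿ, dist(x, A) ≤ dist(x, Ã) ≤ τ · max_{1≤i≤m} max(f̃_i(x), 0). -/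
open scoped RealInnerProductSpace

theorem stmt12 (n m : ℕ) (hm : 1 ≤ m)
    (ftil : Fin m → EuclideanSpace ℝ (Fin n) → ℝ)
    (hconv : ∀ i, ConvexOn ℝ Set.univ (ftil i))
    (ρ : Fin m → ℝ) (hρ : ∀ i, 0 ≤ ρ i)
    (f : Fin m → EuclideanSpace ℝ (Fin n) → ℝ)
    (hf : ∀ i x, f i x = ftil i x - ρ i / 2 * ‖x‖ ^ 2)
    (Atil A : Set (EuclideanSpace ℝ (Fin n)))
    (hAtil : Atil = {x | ∀ i, ftil i x ≤ 0}) (hA : A = {x | ∀ i, f i x ≤ 0})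
    (hint : interior Atil = {x | ∀ i, ftil i x < 0})
    (hne : {x : EuclideanSpace ℝ (Fin n) | ∀ i, ftil i x < 0}.Nonempty)
    (κ : ℝ) (hκ : 0 < κ)
    (hbd : ∀ xbar ∈ frontier Atil, ∃ abar ∈ interior Atil,
      ‖xbar - abar‖ ≤ κ * ⨅ i, -ftil i abar) :
    ∃ τ > (0 : ℝ), ∀ x,
      Metric.infDist x A ≤ Metric.infDist x Atil ∧
      Metric.infDist x Atil ≤ τ * ⨆ i, max (ftil i x) 0 := by
  haveI : Nonempty (Fin m) := ⟨⟨0, hm⟩⟩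
  -- continuity of ftil i
  have hcont : ∀ i, Continuous (ftil i) := fun i => by
    rw [← continuousOn_univ]
    exact (hconv i).continuousOn isOpen_univ
  have hclosed : IsClosed Atil := by
    rw [hAtil]
    have : {x : EuclideanSpace ℝ (Fin n) | ∀ i, ftil i x ≤ 0} =
        ⋂ i, {x | ftil i x ≤ 0} := by ext x; simp
    rw [this]
    exact isClosed_iInter fun i => isClosed_le (hcont i) continuous_const
  have hsub : Atil ⊆ A := by
    rw [hAtil, hA]
    intro x hx i
    have := hρ i
    have hn : (0:ℝ) ≤ ρ i / 2 * ‖x‖ ^ 2 := by positivity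
    rw [hf i x]
    linarith [hx i]
  have hAtilne : Atil.Nonempty := by
    obtain ⟨x, hx⟩ := hne
    exact ⟨x, by rw [hAtil]; exact fun i => (hx i).le⟩
  refine ⟨κ, hκ, fun x => ?_⟩
  constructor
  · exact Metric.infDist_le_infDist_of_subset hsub hAtilne
  -- sup s
  set s : ℝ := ⨆ i, max (ftil i x) 0 with hs
  have hbdd : BddAbove (Set.range fun i => max (ftil i x) 0) :=
    (Set.finite_range _).bddAbove
  have hsge : ∀ i, max (ftil i x) 0 ≤ s := fun i => le_ciSup hbdd i
  have hs0 : 0 ≤ s := le_trans (le_max_right _ _) (hsge ⟨0, hm⟩)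
  by_cases hxA : x ∈ Atil
  · rw [Metric.infDist_zero_of_mem hxA]
    positivity
  -- x ∉ Atil
  have hspos : 0 < s := by
    rw [hAtil] at hxA
    simp only [Set.mem_setOf_eq] at hxA
    push_neg at hxA
    obtain ⟨i, hi⟩ := hxA
    exact lt_of_lt_of_le (lt_of_lt_of_le hi (le_max_left _ _)) (hsge i)
  have hfx : ∀ i, ftil i x ≤ s := fun i => le_trans (le_max_left _ _) (hsge i)
  -- projection onto Atil
  obtain ⟨xbar, hxbarA, hxbard⟩ := hclosed.exists_infDist_eq_dist hAtilne x
  set d : ℝ := Metric.infDist x Atil with hd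
  have hdd : d = ‖x - xbar‖ := by rw [hxbard, dist_eq_norm]
  -- xbar is on the frontier
  have hxbarfr : xbar ∈ frontier Atil := by
    rw [hclosed.frontier_eq]
    refine ⟨hxbarA, fun hintmem => ?_⟩
    obtain ⟨ε, hε, hball⟩ := Metric.isOpen_iff.1 isOpen_interior xbar hintmem
    have hxne : x ≠ xbar := fun h => hxA (h ▸ hxbarA)
    have hD : (0:ℝ) < ‖x - xbar‖ := by
      rw [norm_pos_iff]; exact sub_ne_zero_of_ne hxne
    set t : ℝ := min (ε / (2 * ‖x - xbar‖)) (1/2) with ht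
    have ht0 : 0 < t := lt_min (by positivity) (by norm_num)
    have ht1 : t ≤ 1/2 := min_le_right _ _
    set z : EuclideanSpace ℝ (Fin n) := xbar + t • (x - xbar) with hz
    have hzA : z ∈ Atil := by
      apply interior_subset
      apply hball
      rw [Metric.mem_ball, dist_eq_norm, hz]
      have : ‖xbar + t • (x - xbar) - xbar‖ = t * ‖x - xbar‖ := by
        rw [add_sub_cancel_left, norm_smul, Real.norm_eq_abs, abs_of_pos ht0]
      rw [this]
      calc t * ‖x - xbar‖ ≤ ε / (2 * ‖x - xbar‖) * ‖x - xbar‖ := by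
            apply mul_le_mul_of_nonneg_right (min_le_left _ _) hD.le
        _ = ε / 2 := by field_simp
        _ < ε := by linarith
    have hle : d ≤ dist x z := Metric.infDist_le_dist_of_mem hzA
    have : dist x z = (1 - t) * ‖x - xbar‖ := by
      rw [dist_eq_norm, hz]
      have hxz : x - (xbar + t • (x - xbar)) = (1 - t) • (x - xbar) := by
        rw [sub_smul, one_smul]; abel
      rw [hxz, norm_smul, Real.norm_eq_abs, abs_of_pos (by linarith : (0:ℝ) < 1 - t)]
    rw [this] at hle
    rw [hdd] at hle
    nlinarith
  obtain ⟨abar, habarint, habar⟩ := hbd xbar hxbarfr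
  set r : ℝ := ⨅ i, -ftil i abar with hr
  have habars : ∀ i, ftil i abar < 0 := by rw [hint] at habarint; exact habarint
  have hrle : ∀ i, r ≤ -ftil i abar := fun i =>
    ciInf_le (Set.finite_range _).bddBelow i
  have hrpos : 0 < r := by
    obtain ⟨j, hj⟩ := Finite.exists_min (fun i => -ftil i abar)
    have : r = -ftil j abar := le_antisymm (hrle j) (le_ciInf hj)
    rw [this]; linarith [habars j]
  -- convex combination
  set lam : ℝ := s / (s + r) with hlam
  set mu : ℝ := r / (s + r) with hmu
  have hsr : 0 < s + r := by linarith
  have hlam0 : 0 ≤ lam := by positivity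
  have hmu0 : 0 ≤ mu := by positivity
  have hsum : lam + mu = 1 := by rw [hlam, hmu]; field_simp
  set y : EuclideanSpace ℝ (Fin n) := lam • abar + mu • x with hy
  have hyA : y ∈ Atil := by
    rw [hAtil]
    intro i
    have hci := (hconv i).2 (Set.mem_univ abar) (Set.mem_univ x) hlam0 hmu0 hsum
    have h1 : ftil i abar ≤ -r := by linarith [hrle i]
    have h2 : ftil i x ≤ s := hfx i
    have : lam * ftil i abar + mu * ftil i x ≤ lam * (-r) + mu * s := by
      apply add_le_add
      · exact mul_le_mul_of_nonneg_left h1 hlam0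
      · exact mul_le_mul_of_nonneg_left h2 hmu0
    have hz : lam * (-r) + mu * s = 0 := by
      rw [hlam, hmu, div_mul_eq_mul_div, div_mul_eq_mul_div, ← add_div,
        div_eq_zero_iff]
      left; ring
    calc ftil i y ≤ lam * ftil i abar + mu * ftil i x := hci
      _ ≤ 0 := by linarith
  have hxy : dist x y = lam * ‖x - abar‖ := by
    rw [dist_eq_norm, hy]
    have hmu1 : mu = 1 - lam := by linarith
    have : x - (lam • abar + mu • x) = lam • (x - abar) := by
      rw [hmu1]; module
    rw [this, norm_smul, Real.norm_eq_abs, abs_of_nonneg hlam0]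
  have hdy : d ≤ lam * ‖x - abar‖ := by
    rw [← hxy]; exact Metric.infDist_le_dist_of_mem hyA
  have htri : ‖x - abar‖ ≤ d + κ * r := by
    calc ‖x - abar‖ ≤ ‖x - xbar‖ + ‖xbar - abar‖ := by
          have : x - abar = (x - xbar) + (xbar - abar) := by abel
          rw [this]; exact norm_add_le _ _
      _ ≤ d + κ * r := by rw [hdd]; linarith [habar]
  have hkey : d ≤ lam * (d + κ * r) := by
    apply hdy.trans
    apply mul_le_mul_of_nonneg_left htri hlam0
  -- conclude d ≤ κ * s
  have hfin : d ≤ κ * s := by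
    have h1 : d * (s + r) ≤ s * (d + κ * r) := by
      have := mul_le_mul_of_nonneg_right hkey hsr.le
      rw [hlam] at this
      calc d * (s + r) ≤ s / (s + r) * (d + κ * r) * (s + r) := this
        _ = s * (d + κ * r) := by field_simp
    nlinarith
  exact hfin
end

section
/- Let m ≥ 1 and, for i ∈ {1,…,m}, let a_i > 0, b_i ∈ ℝⁿ, c_i ∈ ℝ. Let O = {x ∈ ℝⁿ : −a_i‖x‖² + ⟨b_i, x⟩ + c_i ≤ 0 for all i}, assume O ≠ ∅, and let α = inf_{x∈O} ‖x‖² (which is attained). Then a point x ∈ ℝⁿ attains the minimum of ‖·‖² over O if and only if x lies in the intersection of the sphere {y : ‖y‖² = α} with the polyhedron {y : ⟨b_i, y⟩ ≤ a_i α − c_i for all i ∈ {1,…,m}}. -/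
open scoped RealInnerProductSpace

theorem stmt15 (n m : ℕ) (hm : 1 ≤ m)
    (a : Fin m → ℝ) (ha : ∀ i, 0 < a i)
    (b : Fin m → EuclideanSpace ℝ (Fin n)) (c : Fin m → ℝ)
    (O : Set (EuclideanSpace ℝ (Fin n)))
    (hO : O = {x | ∀ i, -(a i) * ‖x‖ ^ 2 + ⟪b i, x⟫ + c i ≤ 0})
    (hOne : O.Nonempty)
    (α : ℝ) (hα : IsLeast ((fun x : EuclideanSpace ℝ (Fin n) => ‖x‖ ^ 2) '' O) α) :
    ∀ x : EuclideanSpace ℝ (Fin n),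
      (x ∈ O ∧ ∀ y ∈ O, ‖x‖ ^ 2 ≤ ‖y‖ ^ 2) ↔
      (‖x‖ ^ 2 = α ∧ ∀ i, ⟪b i, x⟫ ≤ a i * α - c i) := by
  intro x
  obtain ⟨⟨z, hzO, hz⟩, hlb⟩ := hα
  constructor
  · rintro ⟨hxO, hmin⟩
    have hxα : ‖x‖ ^ 2 = α := le_antisymm (hz ▸ hmin z hzO) (hlb ⟨x, hxO, rfl⟩)
    refine ⟨hxα, fun i => ?_⟩
    have := (hO ▸ hxO) i
    rw [hxα] at this
    linarith
  · rintro ⟨hxα, hineq⟩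
    have hxO : x ∈ O := by
      rw [hO]
      intro i
      have := hineq i
      rw [hxα]
      linarith
    exact ⟨hxO, fun y hyO => hxα ▸ hlb ⟨y, hyO, rfl⟩⟩
end

section
/- Let ψ : ℝ → ℝ be defined by ψ(ξ) = 1/(1 + e^ξ). Then for every ξ ∈ ℝ, the second derivative ψ''(ξ) = e^ξ(e^ξ − 1)/(1 + e^ξ)³ satisfies ψ''(ξ) ≥ −1/(6√3), with equality when e^ξ = 2 − √3. Consequently, the function ξ ↦ 1/(1 + e^ξ) + ξ²/(12√3) is convex on ℝ; that is, ψ is ρ_ψ-weakly convex with ρ_ψ = 1/(6√3). -/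
lemma stmt17_epos (x : ℝ) : (0:ℝ) < 1 + Real.exp x := by positivity

lemma stmt17_hd1 (ξ : ℝ) : HasDerivAt (fun x => 1/(1+Real.exp x))
    (-(Real.exp ξ)/(1+Real.exp ξ)^2) ξ := by
  have h : HasDerivAt (fun x => 1+Real.exp x) (Real.exp ξ) ξ :=
    (Real.hasDerivAt_exp ξ).const_add 1
  have := h.inv (ne_of_gt (stmt17_epos ξ))
  simpa [one_div, neg_div, Pi.inv_def] using this

lemma stmt17_hd2 (ξ : ℝ) : HasDerivAt (fun x => -(Real.exp x)/(1+Real.exp x)^2)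
    (Real.exp ξ*(Real.exp ξ-1)/(1+Real.exp ξ)^3) ξ := by
  have h : HasDerivAt (fun x => 1+Real.exp x) (Real.exp ξ) ξ :=
    (Real.hasDerivAt_exp ξ).const_add 1
  have hu : HasDerivAt (fun x => -(Real.exp x)) (-(Real.exp ξ)) ξ := (Real.hasDerivAt_exp ξ).neg
  have hv : HasDerivAt (fun x => (1+Real.exp x)^2) (2*(1+Real.exp ξ)*Real.exp ξ) ξ := by
    simpa [mul_comm, Pi.pow_def] using h.pow 2
  have hne : (1+Real.exp ξ)^2 ≠ 0 := by positivity
  have H : HasDerivAt (fun x => -(Real.exp x)/(1+Real.exp x)^2) _ ξ := hu.div hv hne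
  convert H using 1
  have h0 : (0:ℝ) < 1+Real.exp ξ := stmt17_epos ξ
  rw [div_eq_div_iff (by positivity) (by positivity)]
  ring

lemma stmt17_ineq (ξ : ℝ) : -(1 / (6 * Real.sqrt 3)) ≤
    Real.exp ξ * (Real.exp ξ - 1) / (1 + Real.exp ξ) ^ 3 := by
  set t := Real.exp ξ with ht'
  have ht : 0 < t := Real.exp_pos ξ
  set s := Real.sqrt 3 with hs'
  have hs : s^2 = 3 := Real.sq_sqrt (by norm_num)
  have hs0 : 0 < s := Real.sqrt_pos.mpr (by norm_num)
  rw [show -(1/(6*s)) = (-1)/(6*s) by ring,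
    div_le_div_iff₀ (by positivity) (by positivity)]
  nlinarith [mul_nonneg (sq_nonneg (t - (2 - s))) (by positivity : (0:ℝ) ≤ t + 7 + 4*s), hs, ht, hs0]

theorem stmt17 (ψ : ℝ → ℝ) (hψ : ∀ ξ, ψ ξ = 1 / (1 + Real.exp ξ)) :
    (∀ ξ, deriv (deriv ψ) ξ = Real.exp ξ * (Real.exp ξ - 1) / (1 + Real.exp ξ) ^ 3) ∧
    (∀ ξ, -(1 / (6 * Real.sqrt 3)) ≤
      Real.exp ξ * (Real.exp ξ - 1) / (1 + Real.exp ξ) ^ 3) ∧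
    (∀ ξ, Real.exp ξ = 2 - Real.sqrt 3 →
      Real.exp ξ * (Real.exp ξ - 1) / (1 + Real.exp ξ) ^ 3 = -(1 / (6 * Real.sqrt 3))) ∧
    ConvexOn ℝ Set.univ (fun ξ => 1 / (1 + Real.exp ξ) + ξ ^ 2 / (12 * Real.sqrt 3)) := by
  have hψf : ψ = fun x => 1/(1+Real.exp x) := funext hψ
  subst hψf
  have hdψ : deriv (fun x => 1/(1+Real.exp x)) = fun ξ => -(Real.exp ξ)/(1+Real.exp ξ)^2 :=
    funext fun ξ => (stmt17_hd1 ξ).deriv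
  refine ⟨?_, stmt17_ineq, ?_, ?_⟩
  · intro ξ
    rw [hdψ]
    exact (stmt17_hd2 ξ).deriv
  · intro ξ h
    rw [h]
    set s := Real.sqrt 3 with hs'
    have hs : s^2 = 3 := Real.sq_sqrt (by norm_num)
    have hs0 : 0 < s := Real.sqrt_pos.mpr (by norm_num)
    have hs2 : s < 3 := by nlinarith
    have hne : (1 + (2 - s)) ≠ 0 := by nlinarith
    field_simp
    nlinarith [hs, hs0]
  · have hs : Real.sqrt 3 ^ 2 = 3 := Real.sq_sqrt (by norm_num)
    have hs0 : 0 < Real.sqrt 3 := Real.sqrt_pos.mpr (by norm_num)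
    set f := fun ξ : ℝ => 1 / (1 + Real.exp ξ) + ξ ^ 2 / (12 * Real.sqrt 3) with hf
    have hq : ∀ ξ : ℝ, HasDerivAt (fun x : ℝ => x ^ 2 / (12 * Real.sqrt 3))
        (2 * ξ / (12 * Real.sqrt 3)) ξ := by
      intro ξ
      simpa using (hasDerivAt_pow 2 ξ).div_const (12 * Real.sqrt 3)
    have hd1f : ∀ ξ, HasDerivAt f (-(Real.exp ξ)/(1+Real.exp ξ)^2 + 2*ξ/(12*Real.sqrt 3)) ξ :=
      fun ξ => (stmt17_hd1 ξ).add (hq ξ)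
    have hdf : deriv f = fun ξ => -(Real.exp ξ)/(1+Real.exp ξ)^2 + 2*ξ/(12*Real.sqrt 3) :=
      funext fun ξ => (hd1f ξ).deriv
    have hq2 : ∀ ξ : ℝ, HasDerivAt (fun x : ℝ => 2*x/(12*Real.sqrt 3))
        (2/(12*Real.sqrt 3)) ξ := by
      intro ξ
      simpa using ((hasDerivAt_id ξ).const_mul (2:ℝ)).div_const (12 * Real.sqrt 3)
    have hd2f : ∀ ξ, HasDerivAt (deriv f)
        (Real.exp ξ*(Real.exp ξ-1)/(1+Real.exp ξ)^3 + 2/(12*Real.sqrt 3)) ξ := by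
      intro ξ
      rw [hdf]
      exact (stmt17_hd2 ξ).add (hq2 ξ)
    apply convexOn_univ_of_deriv2_nonneg (fun ξ => (hd1f ξ).differentiableAt)
      (fun ξ => (hd2f ξ).differentiableAt)
    intro ξ
    have : deriv^[2] f ξ = Real.exp ξ*(Real.exp ξ-1)/(1+Real.exp ξ)^3 + 2/(12*Real.sqrt 3) := by
      simp only [Function.iterate_succ, Function.iterate_zero, Function.comp_apply, id]
      exact (hd2f ξ).deriv
    rw [this]
    have h2 : 2/(12*Real.sqrt 3) = 1/(6*Real.sqrt 3) := by ring
    have := stmt17_ineq ξ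
    rw [h2]
    linarith
end
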